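/- Let σ = α₀β₁*α₁⋯βₖ*αₖ be a zigzag-free linear path scheme in ℤ², let q(u) →^σ q(v) via exponents e₁, …, eₖ (so v − u = Δ(α₀⋯αₖ) + Σᵢ eᵢ·Δ(βᵢ)), and let Z be an orthant of ℚ² containing v − u. Then for every index j with Δ(βⱼ) ∉ Z, the exponent satisfies eⱼ ≤ L·N, where L = |σ| is the total length and N bounds the norm of all transition effects. -/

import Mathlib

/-- The effect of a word of vectors in `ℤ^d`: the componentwise sum. -/
def eff {d : ℕ} (L : List (Fin d → ℤ)) : Fin d → ℤ := L.sum

/-- The action word `α₀ β₁^{e₁} α₁ ⋯ β_k^{e_k} α_k` of a linear path scheme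
with paths `α i` (for `i : Fin (k+1)`), cycles `β i` (for `i : Fin k`, `β i`
being the cycle between `α i` and `α (i+1)`), and exponents `e`. -/
def lpsWord {d k : ℕ} (α : Fin (k + 1) → List (Fin d → ℤ))
    (β : Fin k → List (Fin d → ℤ)) (e : Fin k → ℕ) : List (Fin d → ℤ) :=
  α 0 ++ (List.ofFn fun i : Fin k =>
    (List.replicate (e i) (β i)).flatten ++ α i.succ).flatten

/-- The effect of the part of the scheme word strictly before `α i`,
i.e. of `α₀ β₁^{e₁} α₁ ⋯ α_{i-1} β_i^{e_i}`. -/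
def prefEff {d k : ℕ} (α : Fin (k + 1) → List (Fin d → ℤ))
    (β : Fin k → List (Fin d → ℤ)) (e : Fin k → ℕ) (i : Fin (k + 1)) : Fin d → ℤ :=
  ∑ j : Fin k, if (j : ℕ) < (i : ℕ) then eff (α j.castSucc) + (e j) • eff (β j) else 0

/-- `NReach u W v`: the word `W`, fired from the nonnegative vector `u`, keeps
all intermediate vectors componentwise nonnegative and ends at `v`
(`ℕ^d`-semantics of a run along `W`). -/
def NReach {d : ℕ} (u : Fin d → ℤ) (W : List (Fin d → ℤ)) (v : Fin d → ℤ) : Prop :=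
  (∀ m, ∀ x, 0 ≤ u x + eff (W.take m) x) ∧ (∀ x, u x + eff W x = v x)

lemma eff_lpsWord {d k : ℕ} (α : Fin (k + 1) → List (Fin d → ℤ))
    (β : Fin k → List (Fin d → ℤ)) (e : Fin k → ℕ) :
    eff (lpsWord α β e) = eff (α 0) + ∑ i : Fin k, ((e i) • eff (β i) + eff (α i.succ)) := by
  unfold lpsWord eff
  rw [List.sum_append, List.sum_flatten, List.map_ofFn, List.sum_ofFn]
  congr 1
  refine Finset.sum_congr rfl fun i _ => ?_
  simp [List.sum_append, List.sum_flatten, List.map_replicate, List.sum_replicate,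
    Function.comp]

lemma eff_abs_le {d : ℕ} (N : ℕ) (L : List (Fin d → ℤ))
    (h : ∀ w ∈ L, ∀ x, (w x).natAbs ≤ N) (x : Fin d) :
    |eff L x| ≤ (L.length : ℤ) * N := by
  induction L with
  | nil => simp [eff]
  | cons w L ih =>
    have h1 : |w x| ≤ (N : ℤ) := by
      rw [Int.abs_eq_natAbs]
      exact_mod_cast h w List.mem_cons_self x
    have h2 : |eff L x| ≤ (L.length : ℤ) * N :=
      ih fun w hw => h w (List.mem_cons_of_mem _ hw)
    have h3 : eff (w :: L) x = w x + eff L x := by simp [eff]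
    calc |eff (w :: L) x| ≤ |w x| + |eff L x| := by rw [h3]; exact abs_add_le _ _
      _ ≤ (N : ℤ) + (L.length : ℤ) * N := add_le_add h1 h2
      _ = ((w :: L).length : ℤ) * N := by push_cast [List.length_cons]; ring

/-- For a zigzag-free linear path scheme `σ` in dimension 2 realizing a run
`q(u) →^σ q(v)` with exponents `e`, and an orthant `Z` (sign vector `t`)
containing `v − u`, every cycle whose effect is not in `Z` has its exponent
bounded by `L·N`, where `L = |σ|` and `N` bounds the norms of all effects. -/
theorem stmt16 {k : ℕ} (α : Fin (k + 1) → List (Fin 2 → ℤ))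
    (β : Fin k → List (Fin 2 → ℤ)) (e : Fin k → ℕ) (u v : Fin 2 → ℤ)
    (hu : ∀ x, 0 ≤ u x) (hv : ∀ x, 0 ≤ v x)
    (N L : ℕ)
    (hL : L = (∑ i, (α i).length) + ∑ i, (β i).length)
    (hNα : ∀ i, ∀ w ∈ α i, ∀ x, (w x).natAbs ≤ N)
    (hNβ : ∀ i, ∀ w ∈ β i, ∀ x, (w x).natAbs ≤ N)
    -- zigzag-freeness: all cycle effects lie in a common orthant
    (tc : Fin 2 → ℤ) (htc : ∀ x, tc x = 1 ∨ tc x = -1)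
    (hzz : ∀ i x, 0 ≤ eff (β i) x * tc x)
    -- the orthant `Z` containing `v - u`
    (t : Fin 2 → ℤ) (ht : ∀ x, t x = 1 ∨ t x = -1)
    (hZ : ∀ x, 0 ≤ (v x - u x) * t x)
    (hrun : NReach u (lpsWord α β e) v) :
    ∀ j : Fin k, ¬ (∀ x, 0 ≤ eff (β j) x * t x) → e j ≤ L * N := by
  intro j hnot
  push_neg at hnot
  obtain ⟨ℓ, hℓ⟩ := hnot
  -- the effect equation at coordinate ℓ
  have heff : v ℓ - u ℓ =
      (∑ i : Fin (k + 1), eff (α i) ℓ) + ∑ i : Fin k, (e i : ℤ) * eff (β i) ℓ := by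
    have h1 := congrFun (eff_lpsWord α β e) ℓ
    have h2 := hrun.2 ℓ
    rw [h1] at h2
    simp only [Pi.add_apply, Finset.sum_apply, Pi.smul_apply, nsmul_eq_mul,
      Pi.mul_apply, Pi.natCast_apply] at h2
    rw [Finset.sum_add_distrib] at h2
    rw [Fin.sum_univ_succ]
    push_cast at h2 ⊢
    linarith
  set A : ℤ := ∑ i : Fin (k + 1), eff (α i) ℓ with hA
  set S : ℤ := ∑ i : Fin k, (e i : ℤ) * eff (β i) ℓ with hS
  set c : ℤ := tc ℓ with hc
  -- B ≠ 0 and sign analysis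
  have hB : eff (β j) ℓ * t ℓ < 0 := hℓ
  have hBc : 0 ≤ eff (β j) ℓ * c := hzz j ℓ
  have hBne : eff (β j) ℓ ≠ 0 := by
    intro h0; rw [h0] at hB; simp at hB
  have hBcpos : 1 ≤ eff (β j) ℓ * c := by
    rcases htc ℓ with h | h <;> rw [← hc] at h <;> rw [h] at hBc ⊢ <;> omega
  have htℓ : t ℓ = -c := by
    rcases ht ℓ with h1 | h1 <;> rcases htc ℓ with h2 | h2 <;>
      rw [← hc] at h2 <;> rw [h1] at hB <;> rw [h2] at hBcpos ⊢ <;> omega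
  -- D * c ≤ 0
  have hDc : (v ℓ - u ℓ) * c ≤ 0 := by
    have := hZ ℓ
    rw [htℓ] at this
    linarith
  -- e j * (B * c) ≤ S * c
  have hsum : (e j : ℤ) * (eff (β j) ℓ * c) ≤ S * c := by
    rw [hS, Finset.sum_mul]
    refine Finset.single_le_sum (f := fun i => (e i : ℤ) * eff (β i) ℓ * c)
      (fun i _ => ?_) (Finset.mem_univ j) |>.trans_eq' (by ring)
    have h := hzz i ℓ
    rw [← hc] at h
    show 0 ≤ (e i : ℤ) * eff (β i) ℓ * c
    rw [mul_assoc]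
    exact mul_nonneg (Int.natCast_nonneg _) h
  -- |A| ≤ L * N
  have hAle : |A| ≤ (L : ℤ) * N := by
    have h1 : |A| ≤ ∑ i : Fin (k + 1), |eff (α i) ℓ| := Finset.abs_sum_le_sum_abs _ _
    have h2 : ∑ i : Fin (k + 1), |eff (α i) ℓ| ≤ ∑ i : Fin (k + 1), ((α i).length : ℤ) * N :=
      Finset.sum_le_sum fun i _ => eff_abs_le N (α i) (hNα i) ℓ
    have h3 : (∑ i : Fin (k + 1), ((α i).length : ℤ)) ≤ (L : ℤ) := by
      have : (∑ i, (α i).length) ≤ L := by omega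
      exact_mod_cast (Nat.cast_le (α := ℤ)).2 this
    calc |A| ≤ ∑ i : Fin (k + 1), ((α i).length : ℤ) * N := h1.trans h2
      _ = (∑ i : Fin (k + 1), ((α i).length : ℤ)) * N := by rw [Finset.sum_mul]
      _ ≤ (L : ℤ) * N := by
          have : (0 : ℤ) ≤ N := Int.natCast_nonneg N
          exact mul_le_mul_of_nonneg_right h3 this
  -- combine: e j ≤ e j * (B*c) ≤ S*c = (D - A)*c ≤ -A*c ≤ |A| ≤ L*N
  have hSc : S * c = (v ℓ - u ℓ) * c - A * c := by rw [heff]; ring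
  have hAc : -(A * c) ≤ |A| := by
    rcases htc ℓ with h | h <;> rw [← hc] at h <;> rw [h] <;>
      nlinarith [neg_abs_le A, le_abs_self A]
  have hfinal : (e j : ℤ) ≤ (L : ℤ) * N := by
    have h1 : (e j : ℤ) ≤ (e j : ℤ) * (eff (β j) ℓ * c) :=
      le_mul_of_one_le_right (Int.natCast_nonneg _) hBcpos
    linarith
  exact_mod_cast hfinal
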